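/- Let f : ℝ_sym^{n×n} → ℝ be C² with 0 ≤ ⟨∇²f(z)ξ,ξ⟩ ≤ Λ|ξ|²/(1+|z|²)^{1/2} for all symmetric z, ξ, and let f_j(z) = f(z) + (1/(2A_j j²))(1+|z|²)^{(n+1)/2} with A_j > 0, j ∈ ℕ. Then there exists c(n) > 0 such that for all vectors w, e ∈ ℝⁿ, all matrices M ∈ ℝ^{n×n}, and all symmetric z: ⟨∇²f_j(z)((Mw)⊙e), (Mw)⊙e⟩ ≤ |M|² [ Λ|w|²|e|²/(1+|z|²)^{1/2} + (c(n)/(A_j j²)) ( (1+|z|²)^{(n+1)/2} + |w|^{n+1}|e|^{n+1} ) ]. -/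

import Mathlib

open scoped RealInnerProductSpace

section Aux
set_option linter.unusedSectionVars false
set_option linter.unusedVariables false
variable {E : Type*} [NormedAddCommGroup E] [InnerProductSpace ℝ E] [CompleteSpace E]

private lemma hq' (z : E) : HasFDerivAt (fun y : E => 1 + ‖y‖^2) (2 • innerSL ℝ z) z := by
  simpa using ((hasFDerivAt_id z).norm_sq).const_add (1:ℝ)

private lemma gradg_at (κ p : ℝ) (hp : 1 ≤ p) (y : E) :
    HasGradientAt (fun y : E => κ * (1+‖y‖^2)^p) ((2*κ*p*(1+‖y‖^2)^(p-1)) • y) y := by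
  rw [hasGradientAt_iff_hasFDerivAt]
  have hφ : HasDerivAt (fun t : ℝ => κ * t ^ p) (κ * (p * (1+‖y‖^2)^(p-1))) (1+‖y‖^2) :=
    (Real.hasDerivAt_rpow_const (Or.inr hp)).const_mul κ
  have h := hφ.comp_hasFDerivAt y (hq' y)
  convert h using 1
  · rfl
  · rfl
  ext v
  simp [InnerProductSpace.toDual_apply_apply, real_inner_smul_left]
  ring

private lemma grad_f_diff (f : E → ℝ) (hf : ContDiff ℝ 2 f) : Differentiable ℝ (gradient f) := by
  have h1 : ContDiff ℝ 1 (fderiv ℝ f) := hf.fderiv_right (by norm_num)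
  have h2 : gradient f = fun x => (InnerProductSpace.toDual ℝ E).symm (fderiv ℝ f x) := rfl
  rw [h2]
  exact (InnerProductSpace.toDual ℝ E).symm.differentiable.comp (h1.differentiable (by norm_num))

private lemma grad_add (f : E → ℝ) (hf : ContDiff ℝ 2 f) (κ p : ℝ) (hp : 1 ≤ p) :
    gradient (fun y => f y + κ * (1+‖y‖^2)^p)
      = fun y => gradient f y + (2*κ*p*(1+‖y‖^2)^(p-1)) • y := by
  apply gradient_eq; intro y
  rw [hasGradientAt_iff_hasFDerivAt, map_add]
  exact ((hf.differentiable (by norm_num) y).hasGradientAt.hasFDerivAt).add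
    (gradg_at κ p hp y).hasFDerivAt

private lemma hessG (κ p : ℝ) (hκ : 0 ≤ κ) (hp : 1 ≤ p) (z ξ : E) :
    DifferentiableAt ℝ (fun y : E => (2*κ*p*(1+‖y‖^2)^(p-1)) • y) z ∧
    ⟪fderiv ℝ (fun y : E => (2*κ*p*(1+‖y‖^2)^(p-1)) • y) z ξ, ξ⟫ ≤
      2*κ*p*(2*p-1)*(1+‖z‖^2)^(p-1)*‖ξ‖^2 := by
  have ht : (0:ℝ) < 1 + ‖z‖^2 := by positivity
  have hh : HasFDerivAt (fun y : E => 2*κ*p*(1+‖y‖^2)^(p-1))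
      (((2*κ*p)*((p-1) * (1+‖z‖^2)^(p-1-1))) • (2 • innerSL ℝ z)) z := by
    have hc := ((Real.hasDerivAt_rpow_const (p := p-1) (Or.inl ht.ne')).const_mul
      (2*κ*p)).comp_hasFDerivAt z (hq' z)
    exact hc
  have hG : HasFDerivAt (fun y : E => (2*κ*p*(1+‖y‖^2)^(p-1)) • y)
      ((2*κ*p*(1+‖z‖^2)^(p-1)) • ContinuousLinearMap.id ℝ E
        + ((((2*κ*p)*((p-1) * (1+‖z‖^2)^(p-1-1))) • (2 • innerSL ℝ z)).smulRight z)) z :=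
    hh.smul (hasFDerivAt_id z)
  refine ⟨hG.differentiableAt, ?_⟩
  rw [hG.fderiv]
  have hval : ⟪((2*κ*p*(1+‖z‖^2)^(p-1)) • ContinuousLinearMap.id ℝ E
        + ((((2*κ*p)*((p-1) * (1+‖z‖^2)^(p-1-1))) • (2 • innerSL ℝ z)).smulRight z)) ξ, ξ⟫
      = 2*κ*p*(1+‖z‖^2)^(p-1)*‖ξ‖^2
        + (4*κ*p*(p-1)*(1+‖z‖^2)^(p-1-1)) * (⟪z,ξ⟫*⟪z,ξ⟫) := by
    simp [inner_add_left, real_inner_smul_left, real_inner_self_eq_norm_sq, real_inner_comm z ξ]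
    ring
  rw [hval]
  have h1 : ⟪z,ξ⟫*⟪z,ξ⟫ ≤ (1+‖z‖^2) * ‖ξ‖^2 := by
    have := real_inner_mul_inner_self_le z ξ
    rw [real_inner_self_eq_norm_sq, real_inner_self_eq_norm_sq] at this
    nlinarith [sq_nonneg ‖ξ‖]
  have h2 : (4*κ*p*(p-1)*(1+‖z‖^2)^(p-1-1)) * (⟪z,ξ⟫*⟪z,ξ⟫)
      ≤ (4*κ*p*(p-1)*(1+‖z‖^2)^(p-1-1)) * ((1+‖z‖^2) * ‖ξ‖^2) := by
    apply mul_le_mul_of_nonneg_left h1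
    have hX := Real.rpow_nonneg ht.le (p-1-1)
    have : 0 ≤ 4*κ*p*(p-1) := by
      have h0 : (0:ℝ) ≤ p := by linarith
      have hp1 : (0:ℝ) ≤ p - 1 := by linarith
      nlinarith [mul_nonneg (mul_nonneg hκ h0) hp1]
    exact mul_nonneg this hX
  have h3 : (1+‖z‖^2)^(p-1-1) * (1+‖z‖^2) = (1+‖z‖^2)^(p-1) := by
    rw [← Real.rpow_add_one ht.ne']; ring_nf
  have key : 4*κ*p*(p-1)*(1+‖z‖^2)^(p-1-1) * ((1+‖z‖^2)*‖ξ‖^2)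
      = 4*κ*p*(p-1)*((1+‖z‖^2)^(p-1)*‖ξ‖^2) := by rw [← h3]; ring
  calc 2*κ*p*(1+‖z‖^2)^(p-1)*‖ξ‖^2
        + (4*κ*p*(p-1)*(1+‖z‖^2)^(p-1-1)) * (⟪z,ξ⟫*⟪z,ξ⟫)
      ≤ 2*κ*p*(1+‖z‖^2)^(p-1)*‖ξ‖^2 + 4*κ*p*(p-1)*((1+‖z‖^2)^(p-1)*‖ξ‖^2) :=
        add_le_add_right (h2.trans_eq key) _
    _ = 2*κ*p*(2*p-1)*(1+‖z‖^2)^(p-1)*‖ξ‖^2 := by ring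

private lemma young_aux (t s p : ℝ) (ht : 1 ≤ t) (hs : 0 ≤ s) (hp : 1 ≤ p) :
    t^(p-1) * s^2 ≤ t^p + (s^2)^p := by
  have ht0 : (0:ℝ) < t := by linarith
  have hp1 : (0:ℝ) ≤ p - 1 := by linarith
  rcases le_total (s^2) t with h | h
  · have h1 : t^(p-1) * s^2 ≤ t^(p-1) * t :=
      mul_le_mul_of_nonneg_left h (Real.rpow_nonneg ht0.le _)
    have h2 : t^(p-1) * t = t^p := by rw [← Real.rpow_add_one ht0.ne']; ring_nf
    have h3 : (0:ℝ) ≤ (s^2)^p := Real.rpow_nonneg (by positivity) _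
    linarith
  · have hs0 : (0:ℝ) < s^2 := lt_of_lt_of_le ht0 h
    have h1 : t^(p-1) ≤ (s^2)^(p-1) := Real.rpow_le_rpow ht0.le h hp1
    have h2 : t^(p-1) * s^2 ≤ (s^2)^(p-1) * s^2 :=
      mul_le_mul_of_nonneg_right h1 (by positivity)
    have h3 : (s^2)^(p-1) * s^2 = (s^2)^p := by rw [← Real.rpow_add_one hs0.ne']; ring_nf
    have h4 : (0:ℝ) ≤ t^p := Real.rpow_nonneg ht0.le _
    linarith

end Aux

private lemma eucl_norm_sq {ι : Type*} [Fintype ι] (x : EuclideanSpace ℝ ι) :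
    ‖x‖^2 = ∑ i, (x i)^2 := by
  rw [EuclideanSpace.norm_eq, Real.sq_sqrt (by positivity)]
  simp [sq_abs]

/-- The symmetric tensor product `a ⊙ b = (abᵀ + baᵀ)/2`, as an element of the Euclidean space
of `n × n` arrays with the Hilbert–Schmidt inner product. -/
noncomputable def symProd {n : ℕ} (a b : EuclideanSpace ℝ (Fin n)) :
    EuclideanSpace ℝ (Fin n × Fin n) :=
  (EuclideanSpace.equiv (Fin n × Fin n) ℝ).symm (fun p => (a p.1 * b p.2 + a p.2 * b p.1) / 2)

/-- Matrix-vector multiplication, landing in Euclidean space. -/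
noncomputable def matVec {n : ℕ} (M : Matrix (Fin n) (Fin n) ℝ) (w : EuclideanSpace ℝ (Fin n)) :
    EuclideanSpace ℝ (Fin n) :=
  (EuclideanSpace.equiv (Fin n) ℝ).symm (M.mulVec (fun i => w i))

/-- The Hilbert–Schmidt (Frobenius) norm of a real `n × n` matrix. -/
noncomputable def frobNorm {n : ℕ} (M : Matrix (Fin n) (Fin n) ℝ) : ℝ :=
  Real.sqrt (∑ i, ∑ j, (M i j) ^ 2)

private lemma symProd_norm_sq_le {n : ℕ} (a b : EuclideanSpace ℝ (Fin n)) :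
    ‖symProd a b‖^2 ≤ ‖a‖^2 * ‖b‖^2 := by
  rw [eucl_norm_sq, eucl_norm_sq, eucl_norm_sq]
  have step1 : ∑ p : Fin n × Fin n, (symProd a b p)^2
      ≤ ∑ p : Fin n × Fin n, ((a p.1 * b p.2)^2 + (a p.2 * b p.1)^2)/2 := by
    apply Finset.sum_le_sum
    intro p _
    have h : symProd a b p = (a p.1 * b p.2 + a p.2 * b p.1) / 2 := rfl
    rw [h]
    nlinarith [sq_nonneg (a p.1 * b p.2 - a p.2 * b p.1)]
  refine step1.trans (le_of_eq ?_)
  rw [Fintype.sum_prod_type]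
  have hswap : ∑ i, ∑ j, (a j * b i)^2 = ∑ i, ∑ j, (a i * b j)^2 := by
    rw [Finset.sum_comm]
  calc ∑ i, ∑ j, ((a i * b j)^2 + (a j * b i)^2)/2
      = (∑ i, ∑ j, (a i * b j)^2)/2 + (∑ i, ∑ j, (a j * b i)^2)/2 := by
        simp [add_div, Finset.sum_add_distrib, Finset.sum_div]
    _ = ∑ i, ∑ j, (a i * b j)^2 := by rw [hswap]; ring
    _ = (∑ i, (a i)^2) * (∑ j, (b j)^2) := by
        rw [Finset.sum_mul_sum]
        simp [mul_pow]

private lemma matVec_norm_sq_le {n : ℕ} (M : Matrix (Fin n) (Fin n) ℝ)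
    (w : EuclideanSpace ℝ (Fin n)) :
    ‖matVec M w‖^2 ≤ frobNorm M ^2 * ‖w‖^2 := by
  rw [eucl_norm_sq, eucl_norm_sq]
  have hF : frobNorm M ^2 = ∑ i, ∑ j, (M i j)^2 := by
    rw [frobNorm, Real.sq_sqrt (by positivity)]
  rw [hF, Finset.sum_mul]
  apply Finset.sum_le_sum
  intro i _
  have h : matVec M w i = ∑ j, M i j * w j := by
    show M.mulVec (fun i => w i) i = _
    simp [Matrix.mulVec, dotProduct]
  rw [h]
  exact Finset.sum_mul_sq_le_sq_mul_sq _ _ _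

/-- For a `C²` integrand `f` with degenerate elliptic Hessian bounds
`0 ≤ ⟨∇²f(z)ξ,ξ⟩ ≤ Λ|ξ|²/(1+|z|²)^{1/2}` and the perturbed integrand
`f_j(z) = f(z) + (1/(2A_j j²))(1+|z|²)^{(n+1)/2}`, there is a constant `c(n) > 0` such that
`⟨∇²f_j(z)((Mw)⊙e), (Mw)⊙e⟩ ≤ |M|²[Λ|w|²|e|²/(1+|z|²)^{1/2}
  + (c(n)/(A_j j²))((1+|z|²)^{(n+1)/2} + |w|^{n+1}|e|^{n+1})]`. -/
theorem perturbed_hessian_symProd_bound (n : ℕ) (hn : 1 ≤ n) :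
    ∃ c : ℝ, 0 < c ∧
      ∀ (f : EuclideanSpace ℝ (Fin n × Fin n) → ℝ) (Λ A : ℝ) (j : ℕ),
        ContDiff ℝ 2 f → 0 ≤ Λ → 0 < A → 1 ≤ j →
        (∀ z ξ : EuclideanSpace ℝ (Fin n × Fin n),
          0 ≤ ⟪fderiv ℝ (gradient f) z ξ, ξ⟫ ∧
          ⟪fderiv ℝ (gradient f) z ξ, ξ⟫ ≤ Λ * ‖ξ‖ ^ 2 / (1 + ‖z‖ ^ 2) ^ ((1 : ℝ) / 2)) →
        ∀ (w e : EuclideanSpace ℝ (Fin n)) (M : Matrix (Fin n) (Fin n) ℝ)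
          (z : EuclideanSpace ℝ (Fin n × Fin n)),
          ⟪fderiv ℝ (gradient (fun y => f y
              + (1 / (2 * A * (j : ℝ) ^ 2)) * (1 + ‖y‖ ^ 2) ^ (((n : ℝ) + 1) / 2))) z
              (symProd (matVec M w) e), symProd (matVec M w) e⟫
            ≤ frobNorm M ^ 2 *
                (Λ * ‖w‖ ^ 2 * ‖e‖ ^ 2 / (1 + ‖z‖ ^ 2) ^ ((1 : ℝ) / 2)
                  + c / (A * (j : ℝ) ^ 2) *
                    ((1 + ‖z‖ ^ 2) ^ (((n : ℝ) + 1) / 2) + ‖w‖ ^ (n + 1) * ‖e‖ ^ (n + 1))) := by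
  have hn1 : (1:ℝ) ≤ (n:ℝ) := by exact_mod_cast hn
  refine ⟨(n:ℝ) * ((n:ℝ)+1), by nlinarith, ?_⟩
  intro f Λ A j hf hΛ hA hj hyp w e M z
  have hj1 : (1:ℝ) ≤ (j:ℝ) := by exact_mod_cast hj
  have hjsq : (0:ℝ) < (j:ℝ)^2 := by nlinarith
  have hden : (0:ℝ) < 2 * A * (j:ℝ)^2 := by positivity
  have hAj : (0:ℝ) < A * (j:ℝ)^2 := by positivity
  set κ : ℝ := 1 / (2 * A * (j:ℝ)^2) with hκdef
  set p : ℝ := ((n:ℝ)+1)/2 with hpdef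
  have hκ : (0:ℝ) ≤ κ := le_of_lt (by rw [hκdef]; positivity)
  have hp : (1:ℝ) ≤ p := by rw [hpdef]; linarith
  set ξ := symProd (matVec M w) e with hξdef
  rw [grad_add f hf κ p hp]
  rw [fderiv_fun_add ((grad_f_diff f hf) z) (hessG κ p hκ hp z ξ).1]
  rw [ContinuousLinearMap.add_apply, inner_add_left]
  -- bounds
  have hb1 := (hyp z ξ).2
  have hb2 := (hessG κ p hκ hp z ξ).2
  have ht1 : (1:ℝ) ≤ 1 + ‖z‖^2 := by nlinarith [sq_nonneg ‖z‖]
  have ht0 : (0:ℝ) < 1 + ‖z‖^2 := by positivity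
  have hhalf : (0:ℝ) < (1 + ‖z‖^2)^((1:ℝ)/2) := Real.rpow_pos_of_pos ht0 _
  have hξn : ‖ξ‖^2 ≤ frobNorm M ^2 * (‖w‖^2 * ‖e‖^2) := by
    calc ‖ξ‖^2 ≤ ‖matVec M w‖^2 * ‖e‖^2 := symProd_norm_sq_le _ _
      _ ≤ (frobNorm M ^2 * ‖w‖^2) * ‖e‖^2 :=
          mul_le_mul_of_nonneg_right (matVec_norm_sq_le M w) (sq_nonneg _)
      _ = frobNorm M ^2 * (‖w‖^2 * ‖e‖^2) := by ring
  -- first term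
  have t1 : ⟪fderiv ℝ (gradient f) z ξ, ξ⟫
      ≤ frobNorm M ^2 * (Λ * ‖w‖^2 * ‖e‖^2 / (1 + ‖z‖^2)^((1:ℝ)/2)) := by
    refine hb1.trans ?_
    have hnum : Λ * ‖ξ‖^2 ≤ Λ * (frobNorm M ^2 * (‖w‖^2 * ‖e‖^2)) :=
      mul_le_mul_of_nonneg_left hξn hΛ
    calc Λ * ‖ξ‖^2 / (1 + ‖z‖^2)^((1:ℝ)/2)
        ≤ Λ * (frobNorm M ^2 * (‖w‖^2 * ‖e‖^2)) / (1 + ‖z‖^2)^((1:ℝ)/2) := by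
          gcongr
      _ = frobNorm M ^2 * (Λ * ‖w‖^2 * ‖e‖^2 / (1 + ‖z‖^2)^((1:ℝ)/2)) := by ring
  -- second term
  have hS : ((‖w‖ * ‖e‖)^2 : ℝ) ^ p = ‖w‖^(n+1) * ‖e‖^(n+1) := by
    have hs0 : (0:ℝ) ≤ ‖w‖ * ‖e‖ := by positivity
    rw [hpdef, ← Real.rpow_natCast (‖w‖ * ‖e‖) 2, ← Real.rpow_mul hs0]
    have h2p : ((2:ℕ):ℝ) * (((n:ℝ)+1)/2) = ((n+1 : ℕ) : ℝ) := by push_cast; ring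
    rw [h2p, Real.rpow_natCast, mul_pow]
  have hT1 : (0:ℝ) ≤ (1+‖z‖^2)^(p-1) := Real.rpow_nonneg ht0.le _
  have hTp : (0:ℝ) ≤ (1+‖z‖^2)^p := Real.rpow_nonneg ht0.le _
  have c2 : (1+‖z‖^2)^(p-1) * ‖ξ‖^2
      ≤ frobNorm M ^2 * ((1+‖z‖^2)^p + ‖w‖^(n+1) * ‖e‖^(n+1)) := by
    calc (1+‖z‖^2)^(p-1) * ‖ξ‖^2
        ≤ (1+‖z‖^2)^(p-1) * (frobNorm M ^2 * (‖w‖^2 * ‖e‖^2)) :=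
          mul_le_mul_of_nonneg_left hξn hT1
      _ = frobNorm M ^2 * ((1+‖z‖^2)^(p-1) * (‖w‖ * ‖e‖)^2) := by ring
      _ ≤ frobNorm M ^2 * ((1+‖z‖^2)^p + ((‖w‖ * ‖e‖)^2)^p) :=
          mul_le_mul_of_nonneg_left
            (young_aux _ _ p ht1 (by positivity) hp) (sq_nonneg _)
      _ = frobNorm M ^2 * ((1+‖z‖^2)^p + ‖w‖^(n+1) * ‖e‖^(n+1)) := by rw [hS]
  have hco : 2*κ*p*(2*p-1) = (n:ℝ) * ((n:ℝ)+1) / (2 * (A * (j:ℝ)^2)) := by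
    rw [hκdef, hpdef]
    field_simp
    ring
  have hcon : (0:ℝ) ≤ 2*κ*p*(2*p-1) := by
    rw [hco]; positivity
  have t2 : ⟪fderiv ℝ (fun y : EuclideanSpace ℝ (Fin n × Fin n) =>
        (2*κ*p*(1+‖y‖^2)^(p-1)) • y) z ξ, ξ⟫
      ≤ frobNorm M ^2 * ((n:ℝ) * ((n:ℝ)+1) / (A * (j:ℝ)^2)
          * ((1+‖z‖^2)^p + ‖w‖^(n+1) * ‖e‖^(n+1))) := by
    refine hb2.trans ?_
    have step : 2*κ*p*(2*p-1)*(1+‖z‖^2)^(p-1)*‖ξ‖^2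
        ≤ 2*κ*p*(2*p-1) * (frobNorm M ^2 * ((1+‖z‖^2)^p + ‖w‖^(n+1) * ‖e‖^(n+1))) := by
      calc 2*κ*p*(2*p-1)*(1+‖z‖^2)^(p-1)*‖ξ‖^2
          = 2*κ*p*(2*p-1) * ((1+‖z‖^2)^(p-1) * ‖ξ‖^2) := by ring
        _ ≤ 2*κ*p*(2*p-1) * (frobNorm M ^2 * ((1+‖z‖^2)^p + ‖w‖^(n+1) * ‖e‖^(n+1))) :=
            mul_le_mul_of_nonneg_left c2 hcon
    refine step.trans ?_
    rw [hco]
    have hbra : (0:ℝ) ≤ (1+‖z‖^2)^p + ‖w‖^(n+1) * ‖e‖^(n+1) := by positivity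
    have hhalfco : (n:ℝ) * ((n:ℝ)+1) / (2 * (A * (j:ℝ)^2))
        ≤ (n:ℝ) * ((n:ℝ)+1) / (A * (j:ℝ)^2) := by
      exact div_le_div_of_nonneg_left (by positivity) hAj (by linarith)
    calc (n:ℝ) * ((n:ℝ)+1) / (2 * (A * (j:ℝ)^2))
          * (frobNorm M ^2 * ((1+‖z‖^2)^p + ‖w‖^(n+1) * ‖e‖^(n+1)))
        ≤ (n:ℝ) * ((n:ℝ)+1) / (A * (j:ℝ)^2)
          * (frobNorm M ^2 * ((1+‖z‖^2)^p + ‖w‖^(n+1) * ‖e‖^(n+1))) :=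
          mul_le_mul_of_nonneg_right hhalfco (mul_nonneg (sq_nonneg _) hbra)
      _ = frobNorm M ^2 * ((n:ℝ) * ((n:ℝ)+1) / (A * (j:ℝ)^2)
            * ((1+‖z‖^2)^p + ‖w‖^(n+1) * ‖e‖^(n+1))) := by ring
  have hsplit : frobNorm M ^ 2 *
      (Λ * ‖w‖ ^ 2 * ‖e‖ ^ 2 / (1 + ‖z‖ ^ 2) ^ ((1:ℝ)/2)
        + (n:ℝ) * ((n:ℝ)+1) / (A * (j:ℝ)^2) * ((1 + ‖z‖^2)^p + ‖w‖^(n+1) * ‖e‖^(n+1)))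
      = frobNorm M ^2 * (Λ * ‖w‖^2 * ‖e‖^2 / (1 + ‖z‖^2)^((1:ℝ)/2))
        + frobNorm M ^2 * ((n:ℝ) * ((n:ℝ)+1) / (A * (j:ℝ)^2)
            * ((1+‖z‖^2)^p + ‖w‖^(n+1) * ‖e‖^(n+1))) := by ring
  linarith [t1, t2, hsplit.ge]
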